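/- If the environment IP is L-dependent in direction ℓ (the sigma-fields σ(ω_x : x·ℓ ≤ 0) and σ(ω_x : x·ℓ ≥ L) are independent) and elliptic with constant κ, then for any path w of range M ending at 0 and any k ≤ 0, the density of the a-posteriori measure IP_w on the half-space sigma-field S_k is bounded: dIP_w|_{S_k} / dIP|_{S_k} ≤ κ^{−card(w ∩ H_{k−L})}, where w ∩ H_{k−L} is the set of path points x_i with x_i·ℓ ≥ k − L. -/

import Mathlib

open MeasureTheory Filter Set
open scoped ENNReal

noncomputable section

abbrev Zd (d : ℕ) := Fin d → ℤ
abbrev Env (d : ℕ) := Zd d → Zd d → ℝ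
abbrev Traj (d : ℕ) := ℕ → Zd d

/-- shift of the environment by `k`: `(T^k ω) x e = ω (k+x) e`. -/
def shiftE {d : ℕ} (k : Zd d) (ω : Env d) : Env d := fun x e => ω (k + x) e

/-- the sup-norm ball of radius `M` in `ℤ^d`, the set of admissible jumps. -/
def box (d M : ℕ) : Finset (Zd d) := Finset.Icc (fun _ => -(M : ℤ)) (fun _ => (M : ℤ))

/-- scalar product `x · ℓ`. -/
def dotl {d : ℕ} (x : Zd d) (ℓ : Fin d → ℝ) : ℝ := ∑ i, (x i : ℝ) * ℓ i

/-- the local drift in direction `ℓ`: `D(ω)·ℓ`. -/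
def driftl {d : ℕ} (M : ℕ) (ℓ : Fin d → ℝ) (ω : Env d) : ℝ :=
  ∑ e ∈ box d M, dotl e ℓ * ω 0 e

/-- `μ` is the law of the quenched walk in environment `ω` started at `x0`:
a probability measure with `X_0 = x0` a.s., and the Markov property with
transition probabilities `ω i (j - i)` from `i` to `j`. -/
def IsWalk {d : ℕ} (μ : Measure (Traj d)) (ω : Env d) (x0 : Zd d) : Prop :=
  IsProbabilityMeasure μ ∧ μ {w | w 0 = x0} = 1 ∧
  ∀ (n : ℕ) (A : Set (Traj d)), MeasurableSet A →
    (∀ w w' : Traj d, (∀ m ≤ n, w m = w' m) → (w ∈ A ↔ w' ∈ A)) →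
    ∀ i j : Zd d,
      μ (A ∩ {w | w n = i ∧ w (n + 1) = j}) =
        ENNReal.ofReal (ω i (j - i)) * μ (A ∩ {w | w n = i})

/-- a nice environment of range `M`: nonnegative transition probabilities of
total mass one, supported on jumps of sup-norm at most `M`. -/
def GoodEnv {d : ℕ} (M : ℕ) (ω : Env d) : Prop :=
  (∀ x e, 0 ≤ ω x e) ∧ (∀ x, ∑ e ∈ box d M, ω x e = 1) ∧
  (∀ x e, e ∉ box d M → ω x e = 0)

/-- `U` is `M`-connected: there is a path of range `M` through all its points. -/
def MConn {d : ℕ} (M : ℕ) (U : Finset (Zd d)) : Prop :=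
  ∃ (n : ℕ) (p : ℕ → Zd d), (∀ i ≤ n, p i ∈ U) ∧
    (∀ i < n, p (i + 1) - p i ∈ box d M) ∧ (∀ x ∈ U, ∃ i ≤ n, p i = x)

/-- `E^ω_{x0}[Σ_{j=0}^{T_U} 1(X_j = x)]`, the expected number of visits to `x`
before exiting `U`. -/
def exitGreen {d : ℕ} (μ : Measure (Traj d)) (U : Set (Zd d)) (x : Zd d) : ℝ≥0∞ :=
  ∑' j : ℕ, μ {w | w j = x ∧ ∀ m < j, w m ∈ U}

/-- Kalikow's condition in direction `ℓ` with constant `ε`, for the annealed walk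
with environment distribution `IP` and quenched laws `P ω` (started at `0`). -/
def KalikowCond {d : ℕ} (IP : Measure (Env d)) (P : Env d → Measure (Traj d))
    (M : ℕ) (ℓ : Fin d → ℝ) (ε : ℝ) : Prop :=
  0 < ε ∧ ∀ U : Finset (Zd d), (0 : Zd d) ∈ U → MConn M U → ∀ x ∈ U,
    ε * ∫ ω, (exitGreen (P ω) (↑U) x).toReal ∂IP ≤
      ∫ ω, driftl M ℓ (shiftE x ω) * (exitGreen (P ω) (↑U) x).toReal ∂IP

/-- shift invariance of the environment measure. -/
def ShiftInv {d : ℕ} (IP : Measure (Env d)) : Prop :=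
  ∀ k : Zd d, Measure.map (shiftE k) IP = IP

/-- ergodicity of the environment measure under the shifts. -/
def ErgEnv {d : ℕ} (IP : Measure (Env d)) : Prop :=
  ShiftInv IP ∧ ∀ S : Set (Env d), MeasurableSet S →
    (∀ k : Zd d, shiftE k ⁻¹' S = S) → IP S = 0 ∨ IP S = 1

/-- invariance of a measure for the environment process viewed from the particle,
whose kernel is `π(ω, A) = Σ_{|e| ≤ M} π_{0e}(ω) 1_A(T^e ω)`. -/
def EnvInvariant {d : ℕ} (M : ℕ) (IPinf : Measure (Env d)) : Prop :=
  ∀ A : Set (Env d), MeasurableSet A →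
    ∫⁻ ω, ∑ e ∈ box d M, ENNReal.ofReal (ω 0 e) * A.indicator 1 (shiftE e ω) ∂IPinf
      = IPinf A

/-- weak ellipticity in direction `ℓ`: a.s. `π_{0j} > 0` for all unit vectors `j`
with `j·ℓ ≥ 0`. -/
def WeakElliptic {d : ℕ} (IP : Measure (Env d)) (ℓ : Fin d → ℝ) : Prop :=
  ∀ᵐ ω ∂IP, ∀ e : Zd d, (∑ i, (e i) * (e i)) = 1 → 0 ≤ dotl e ℓ → 0 < ω 0 e

/-- the half-space σ-field `S_k = σ(ω_x : x·ℓ ≥ k)`. -/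
def Sfield {d : ℕ} (ℓ : Fin d → ℝ) (k : ℝ) : MeasurableSpace (Env d) :=
  ⨆ x ∈ {x : Zd d | k ≤ dotl x ℓ}, MeasurableSpace.comap (fun ω : Env d => ω x) inferInstance

/-- the positions `x_i` of the path with step sequence `s`, ending at `0`. -/
def pathPos {d n : ℕ} (s : Fin n → Zd d) (i : ℕ) : Zd d :=
  -∑ j ∈ Finset.univ.filter (fun j : Fin n => i ≤ (j : ℕ)), s j

/-- the quenched probability `π_w(ω)` of following the path with steps `s`. -/
def pathWeight {d n : ℕ} (s : Fin n → Zd d) (ω : Env d) : ℝ :=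
  ∏ j : Fin n, ω (pathPos s (j : ℕ)) (s j)

/-- the a-posteriori measure `IP_w` with density `π_w / IE(π_w)` w.r.t. `IP`. -/
def postMeasure {d n : ℕ} (IP : Measure (Env d)) (s : Fin n → Zd d) :
    Measure (Env d) :=
  IP.withDensity fun ω =>
    ENNReal.ofReal (pathWeight s ω / ∫ ω', pathWeight s ω' ∂IP)

/-- the σ-field generated by `ω_x` for `x·ℓ ≤ 0`. -/
def SfieldLow {d : ℕ} (ℓ : Fin d → ℝ) : MeasurableSpace (Env d) :=
  ⨆ x ∈ {x : Zd d | dotl x ℓ ≤ 0},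
    MeasurableSpace.comap (fun ω : Env d => ω x) inferInstance


open ProbabilityTheory

lemma dotl_add {d : ℕ} (x y : Zd d) (ℓ : Fin d → ℝ) :
    dotl (x + y) ℓ = dotl x ℓ + dotl y ℓ := by
  unfold dotl
  rw [← Finset.sum_add_distrib]
  refine Finset.sum_congr rfl fun i _ => ?_
  push_cast [Pi.add_apply]
  ring

lemma dotl_neg {d : ℕ} (x : Zd d) (ℓ : Fin d → ℝ) : dotl (-x) ℓ = -dotl x ℓ := by
  unfold dotl
  rw [← Finset.sum_neg_distrib]
  refine Finset.sum_congr rfl fun i _ => ?_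
  push_cast [Pi.neg_apply]
  ring

lemma measurable_evalEnv {d : ℕ} (x e : Zd d) : Measurable fun ω : Env d => ω x e :=
  (measurable_pi_apply e).comp (measurable_pi_apply x)

lemma Sfield_le {d : ℕ} (ℓ : Fin d → ℝ) (k : ℝ) :
    Sfield ℓ k ≤ (inferInstance : MeasurableSpace (Env d)) :=
  iSup_le fun x => iSup_le fun _ => measurable_iff_comap_le.mp (measurable_pi_apply x)

lemma SfieldLow_le {d : ℕ} (ℓ : Fin d → ℝ) :
    SfieldLow ℓ ≤ (inferInstance : MeasurableSpace (Env d)) :=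
  iSup_le fun x => iSup_le fun _ => measurable_iff_comap_le.mp (measurable_pi_apply x)

lemma measurable_shiftE {d : ℕ} (z : Zd d) : Measurable (shiftE z : Env d → Env d) :=
  measurable_pi_lambda _ fun x => measurable_pi_apply (z + x)

lemma shift_preimage_Sfield {d : ℕ} (ℓ : Fin d → ℝ) {k k' : ℝ} (z : Zd d)
    (h : k' ≤ k + dotl z ℓ) {A : Set (Env d)} (hA : MeasurableSet[Sfield ℓ k] A) :
    MeasurableSet[Sfield ℓ k'] (shiftE z ⁻¹' A) := by
  have hmeas : @Measurable _ _ (Sfield ℓ k') (Sfield ℓ k) (shiftE z) := by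
    rw [measurable_iff_comap_le]
    unfold Sfield
    simp only [MeasurableSpace.comap_iSup]
    refine iSup_le fun x => iSup_le fun hx => ?_
    rw [MeasurableSpace.comap_comp]
    have hcomp : ((fun ω : Env d => ω x) ∘ shiftE z) = fun ω : Env d => ω (z + x) := rfl
    rw [hcomp]
    have hx' : k' ≤ dotl (z + x) ℓ := by
      rw [dotl_add]
      have : k ≤ dotl x ℓ := hx
      linarith
    exact le_iSup₂ (f := fun y (_ : y ∈ {y : Zd d | k' ≤ dotl y ℓ}) =>
      MeasurableSpace.comap (fun ω : Env d => ω y) inferInstance) (z + x) hx'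
  exact hmeas hA

lemma measurable_eval_SfieldLow {d : ℕ} (ℓ : Fin d → ℝ) {x : Zd d}
    (hx : dotl x ℓ ≤ 0) (e : Zd d) :
    Measurable[SfieldLow ℓ] fun ω : Env d => ω x e := by
  have h1 : MeasurableSpace.comap (fun ω : Env d => ω x) inferInstance ≤ SfieldLow ℓ :=
    le_iSup₂ (f := fun y (_ : y ∈ {y : Zd d | dotl y ℓ ≤ 0}) =>
      MeasurableSpace.comap (fun ω : Env d => ω y) inferInstance) x hx
  exact ((measurable_pi_apply e).comp (Measurable.of_comap_le le_rfl)).mono h1 le_rfl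

/-- if `IP` is `L`-dependent in direction `ℓ` and `κ`-elliptic, then
for any path `w` of range `M` ending at `0` and any `k ≤ 0`, the a-posteriori
measure satisfies `dIP_w|_{S_k} / dIP|_{S_k} ≤ κ^{-card(w ∩ H_{k-L})}`. -/
theorem posterior_density_bound {d M n : ℕ} (ℓ : Fin d → ℝ) (κ : ℝ)
    (hκ0 : 0 < κ) (hκ1 : κ < 1) (L : ℕ)
    (IP : Measure (Env d)) [IsProbabilityMeasure IP] (hsh : ShiftInv IP)
    (hell : ∀ᵐ ω ∂IP, GoodEnv M ω ∧ ∀ x e : Zd d, e ∈ box d M → κ < ω x e)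
    (hdep : ∀ A B : Set (Env d), MeasurableSet[SfieldLow ℓ] A →
      MeasurableSet[Sfield ℓ (L : ℝ)] B → IP (A ∩ B) = IP A * IP B)
    (s : Fin n → Zd d) (hs : ∀ j, s j ∈ box d M)
    (k : ℝ) (hk : k ≤ 0) :
    ∀ A : Set (Env d), MeasurableSet[Sfield ℓ k] A →
      postMeasure IP s A ≤
        ENNReal.ofReal ((1 / κ) ^
            ((Finset.range (n + 1)).filter
              (fun i => k - L ≤ dotl (pathPos s i) ℓ)).card) * IP A := by
  intro A hA
  classical
  set Iw : ℝ := ∫ ω', pathWeight s ω' ∂IP with hIw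
  set m : ℕ := ((Finset.range (n + 1)).filter
      (fun i => k - L ≤ dotl (pathPos s i) ℓ)).card with hm
  have hA' : MeasurableSet A := Sfield_le ℓ k A hA
  have hpwm : Measurable (pathWeight s) :=
    Finset.measurable_prod _ fun j _ => measurable_evalEnv _ _
  set J : Finset (Fin n) :=
    Finset.univ.filter (fun j : Fin n => ¬ (k - L ≤ dotl (pathPos s (j : ℕ)) ℓ)) with hJdef
  set plow : Env d → ℝ := fun ω => ∏ j ∈ J, ω (pathPos s (j : ℕ)) (s j) with hplowdef
  have hplowm : Measurable plow :=
    Finset.measurable_prod _ fun j _ => measurable_evalEnv _ _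
  -- a.e. bounds on individual factors
  have hfac : ∀ᵐ ω ∂IP, ∀ x e : Zd d, e ∈ box d M → κ < ω x e ∧ ω x e ≤ 1 := by
    filter_upwards [hell] with ω hω
    intro x e he
    refine ⟨hω.2 x e he, ?_⟩
    have h1 := hω.1.2.1 x
    have h2 := Finset.single_le_sum (f := fun e => ω x e) (fun i _ => hω.1.1 x i) he
    linarith
  -- comparing cardinalities
  have hcard : (Finset.univ.filter
      (fun j : Fin n => k - L ≤ dotl (pathPos s (j : ℕ)) ℓ)).card ≤ m := by
    rw [hm]
    apply Finset.card_le_card_of_injOn (fun j : Fin n => (j : ℕ))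
    · intro j hj
      rw [Finset.mem_coe, Finset.mem_filter] at hj ⊢
      exact ⟨Finset.mem_range.mpr (Nat.lt_succ_of_lt j.isLt), hj.2⟩
    · exact fun a _ b _ h => Fin.val_injective h
  -- pointwise comparisons between the path weight and its low part
  have hbounds : ∀ᵐ ω ∂IP,
      pathWeight s ω ≤ plow ω ∧ κ ^ m * plow ω ≤ pathWeight s ω ∧
      κ ^ n ≤ pathWeight s ω ∧ 0 ≤ plow ω ∧ pathWeight s ω ≤ 1 := by
    filter_upwards [hfac] with ω hω
    set f : Fin n → ℝ := fun j => ω (pathPos s (j : ℕ)) (s j) with hf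
    have hfj : ∀ j : Fin n, κ < f j ∧ f j ≤ 1 := fun j => hω _ _ (hs j)
    have hf0 : ∀ j : Fin n, 0 ≤ f j := fun j => (hκ0.trans (hfj j).1).le
    have hplow0 : 0 ≤ plow ω := Finset.prod_nonneg fun j _ => hf0 j
    have hsplit : (∏ j ∈ Finset.univ.filter
          (fun j : Fin n => k - L ≤ dotl (pathPos s (j : ℕ)) ℓ), f j) * plow ω
        = pathWeight s ω := by
      rw [hplowdef]
      exact Finset.prod_filter_mul_prod_filter_not Finset.univ _ f
    have hhigh1 : (∏ j ∈ Finset.univ.filter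
        (fun j : Fin n => k - L ≤ dotl (pathPos s (j : ℕ)) ℓ), f j) ≤ 1 :=
      Finset.prod_le_one (fun j _ => hf0 j) (fun j _ => (hfj j).2)
    have hhighκ : κ ^ m ≤ ∏ j ∈ Finset.univ.filter
        (fun j : Fin n => k - L ≤ dotl (pathPos s (j : ℕ)) ℓ), f j := by
      calc κ ^ m ≤ κ ^ (Finset.univ.filter
            (fun j : Fin n => k - L ≤ dotl (pathPos s (j : ℕ)) ℓ)).card :=
            pow_le_pow_of_le_one hκ0.le hκ1.le hcard
        _ = ∏ _j ∈ Finset.univ.filter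
            (fun j : Fin n => k - L ≤ dotl (pathPos s (j : ℕ)) ℓ), κ := by
            rw [Finset.prod_const]
        _ ≤ _ := Finset.prod_le_prod (fun j _ => hκ0.le) (fun j _ => (hfj j).1.le)
    refine ⟨?_, ?_, ?_, hplow0, ?_⟩
    · rw [← hsplit]
      exact mul_le_of_le_one_left hplow0 hhigh1
    · rw [← hsplit]
      exact mul_le_mul_of_nonneg_right hhighκ hplow0
    · calc κ ^ n = ∏ _j : Fin n, κ := by
            rw [Finset.prod_const, Finset.card_univ, Fintype.card_fin]
        _ ≤ pathWeight s ω :=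
            Finset.prod_le_prod (fun j _ => hκ0.le) (fun j _ => (hfj j).1.le)
    · exact Finset.prod_le_one (fun j _ => hf0 j) (fun j _ => (hfj j).2)
  -- integrability and positivity of the normalisation
  have hint : Integrable (pathWeight s) IP := by
    refine Integrable.mono' (integrable_const (1 : ℝ)) hpwm.aestronglyMeasurable ?_
    filter_upwards [hbounds] with ω h
    rw [Real.norm_eq_abs, abs_of_nonneg ((pow_pos hκ0 n).le.trans h.2.2.1)]
    exact h.2.2.2.2
  have hIwpos : 0 < Iw := by
    have h1 : κ ^ n ≤ Iw := by
      have h2 := integral_mono_ae (integrable_const (κ ^ n)) hint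
        (hbounds.mono fun ω h => h.2.2.1)
      simpa using h2
    exact lt_of_lt_of_le (pow_pos hκ0 n) h1
  have hofReal : ∫⁻ ω, ENNReal.ofReal (pathWeight s ω) ∂IP = ENNReal.ofReal Iw :=
    (ofReal_integral_eq_lintegral_ofReal hint
      (hbounds.mono fun ω h => (pow_pos hκ0 n).le.trans h.2.2.1)).symm
  -- the key independence step
  have hplow_int : ∫⁻ ω in A, ENNReal.ofReal (plow ω) ∂IP
      = IP A * ∫⁻ ω, ENNReal.ofReal (plow ω) ∂IP := by
    by_cases hJe : J.Nonempty
    · obtain ⟨j₀, hj₀J, hj₀max⟩ :=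
        Finset.exists_max_image J (fun j => dotl (pathPos s (j : ℕ)) ℓ) hJe
      have hv : dotl (pathPos s (j₀ : ℕ)) ℓ < k - L := by
        have h := Finset.mem_filter.mp hj₀J
        rw [hJdef] at hj₀J
        exact not_le.mp (Finset.mem_filter.mp hj₀J).2
      set z : Zd d := -(pathPos s (j₀ : ℕ)) with hz
      have hzdot : dotl z ℓ = -dotl (pathPos s (j₀ : ℕ)) ℓ := dotl_neg _ _
      have hshm := measurable_shiftE (d := d) z
      have hA'' : MeasurableSet[Sfield ℓ (L : ℝ)] (shiftE z ⁻¹' A) :=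
        shift_preimage_Sfield ℓ z (by rw [hzdot]; linarith) hA
      have hA''amb : MeasurableSet (shiftE z ⁻¹' A) := hshm hA'
      set g' : Env d → ℝ≥0∞ :=
        fun ω => ENNReal.ofReal (∏ j ∈ J, ω (z + pathPos s (j : ℕ)) (s j)) with hg'
      have hg'amb : Measurable g' :=
        ENNReal.measurable_ofReal.comp
          (Finset.measurable_prod _ fun j _ => measurable_evalEnv _ _)
      have hcompg : ∀ ω, ENNReal.ofReal (plow (shiftE z ω)) = g' ω := fun ω => rfl
      have hcompi : ∀ ω, A.indicator (1 : Env d → ℝ≥0∞) (shiftE z ω)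
          = (shiftE z ⁻¹' A).indicator (1 : Env d → ℝ≥0∞) ω := by
        intro ω
        simp [Set.indicator_apply, Set.mem_preimage]
      have key : ∫⁻ ω, A.indicator (1 : Env d → ℝ≥0∞) ω * ENNReal.ofReal (plow ω) ∂IP
          = ∫⁻ ω, (shiftE z ⁻¹' A).indicator (1 : Env d → ℝ≥0∞) ω * g' ω ∂IP := by
        conv_lhs => rw [← hsh z]
        rw [lintegral_map (f := fun ω => A.indicator (1 : Env d → ℝ≥0∞) ω *
            ENNReal.ofReal (plow ω))
          ((measurable_one.indicator hA').mul
            (ENNReal.measurable_ofReal.comp hplowm)) hshm]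
        exact lintegral_congr fun ω => by rw [hcompi ω, hcompg ω]
      have hind : Indep (Sfield ℓ (L : ℝ)) (SfieldLow ℓ) IP := by
        rw [Indep_iff]
        intro t1 t2 h1 h2
        rw [Set.inter_comm, hdep t2 t1 h2 h1, mul_comm]
      have hmf : Measurable[Sfield ℓ (L : ℝ)]
          ((shiftE z ⁻¹' A).indicator (1 : Env d → ℝ≥0∞)) :=
        measurable_const.indicator hA''
      have hmg : Measurable[SfieldLow ℓ] g' := by
        rw [hg']
        refine ENNReal.measurable_ofReal.comp (Finset.measurable_prod _ fun j hj => ?_)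
        refine measurable_eval_SfieldLow ℓ ?_ (s j)
        rw [dotl_add, hzdot]
        have := hj₀max j hj
        linarith
      have hsplitint : ∫⁻ ω, (shiftE z ⁻¹' A).indicator (1 : Env d → ℝ≥0∞) ω * g' ω ∂IP
          = (∫⁻ ω, (shiftE z ⁻¹' A).indicator (1 : Env d → ℝ≥0∞) ω ∂IP) *
            ∫⁻ ω, g' ω ∂IP :=
        lintegral_mul_eq_lintegral_mul_lintegral_of_independent_measurableSpace
          (Sfield_le ℓ (L : ℝ)) (SfieldLow_le ℓ) hind hmf hmg
      have hIA : ∫⁻ ω, (shiftE z ⁻¹' A).indicator (1 : Env d → ℝ≥0∞) ω ∂IP = IP A := by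
        rw [lintegral_indicator_one hA''amb]
        conv_rhs => rw [← hsh z]
        rw [Measure.map_apply hshm hA']
      have hIg : ∫⁻ ω, g' ω ∂IP = ∫⁻ ω, ENNReal.ofReal (plow ω) ∂IP := by
        conv_rhs => rw [← hsh z]
        rw [lintegral_map (f := fun ω => ENNReal.ofReal (plow ω))
          (ENNReal.measurable_ofReal.comp hplowm) hshm]
        exact lintegral_congr fun ω => (hcompg ω).symm
      have hLHS : ∫⁻ ω in A, ENNReal.ofReal (plow ω) ∂IP
          = ∫⁻ ω, A.indicator (1 : Env d → ℝ≥0∞) ω * ENNReal.ofReal (plow ω) ∂IP := by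
        rw [← lintegral_indicator hA']
        refine lintegral_congr fun ω => ?_
        by_cases hmem : ω ∈ A
        · simp [hmem]
        · simp [hmem]
      rw [hLHS, key, hsplitint, hIA, hIg]
    · rw [Finset.not_nonempty_iff_eq_empty] at hJe
      have hone : ∀ ω : Env d, plow ω = 1 := by
        intro ω; rw [hplowdef]; simp [hJe]
      simp only [hone, ENNReal.ofReal_one, lintegral_one, setLIntegral_one, measure_univ,
        mul_one, Measure.restrict_apply_univ]
  -- comparison steps
  have step1 : ∫⁻ ω in A, ENNReal.ofReal (pathWeight s ω) ∂IP
      ≤ ∫⁻ ω in A, ENNReal.ofReal (plow ω) ∂IP := by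
    refine lintegral_mono_ae ?_
    filter_upwards [ae_restrict_of_ae (hbounds.mono fun ω h => h.1)] with ω h
    exact ENNReal.ofReal_le_ofReal h
  have step3 : ∫⁻ ω, ENNReal.ofReal (plow ω) ∂IP
      ≤ ENNReal.ofReal ((1 / κ) ^ m) * ENNReal.ofReal Iw := by
    have hml : Measurable fun ω : Env d => ENNReal.ofReal (pathWeight s ω) :=
      ENNReal.measurable_ofReal.comp hpwm
    rw [← hofReal, ← lintegral_const_mul _ hml]
    refine lintegral_mono_ae ?_
    filter_upwards [hbounds] with ω h
    have hple : plow ω ≤ (1 / κ) ^ m * pathWeight s ω := by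
      have hpos : (0 : ℝ) ≤ (1 / κ) ^ m := by positivity
      calc plow ω = (1 / κ) ^ m * (κ ^ m * plow ω) := by
            rw [← mul_assoc, one_div, inv_pow, inv_mul_cancel₀ (pow_ne_zero m hκ0.ne'),
              one_mul]
        _ ≤ (1 / κ) ^ m * pathWeight s ω := mul_le_mul_of_nonneg_left h.2.1 hpos
    calc ENNReal.ofReal (plow ω) ≤ ENNReal.ofReal ((1 / κ) ^ m * pathWeight s ω) :=
          ENNReal.ofReal_le_ofReal hple
      _ = ENNReal.ofReal ((1 / κ) ^ m) * ENNReal.ofReal (pathWeight s ω) :=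
          ENNReal.ofReal_mul (by positivity)
  -- assembling everything
  have hcne : ENNReal.ofReal Iw ≠ 0 := (ENNReal.ofReal_pos.mpr hIwpos).ne'
  have hct : ENNReal.ofReal Iw ≠ ⊤ := ENNReal.ofReal_ne_top
  have hpost : postMeasure IP s A
      = (∫⁻ ω in A, ENNReal.ofReal (pathWeight s ω) ∂IP) * (ENNReal.ofReal Iw)⁻¹ := by
    rw [postMeasure, withDensity_apply _ hA']
    rw [← lintegral_mul_const' (ENNReal.ofReal Iw)⁻¹ _ (by simp [hcne])]
    refine lintegral_congr fun ω => ?_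
    rw [div_eq_mul_inv, ENNReal.ofReal_mul' (inv_nonneg.mpr hIwpos.le),
      ENNReal.ofReal_inv_of_pos hIwpos]
  have hmid : ∫⁻ ω in A, ENNReal.ofReal (pathWeight s ω) ∂IP
      ≤ IP A * (ENNReal.ofReal ((1 / κ) ^ m) * ENNReal.ofReal Iw) :=
    step1.trans (by rw [hplow_int]; exact mul_le_mul_right step3 _)
  calc postMeasure IP s A
      = (∫⁻ ω in A, ENNReal.ofReal (pathWeight s ω) ∂IP) * (ENNReal.ofReal Iw)⁻¹ := hpost
    _ ≤ IP A * (ENNReal.ofReal ((1 / κ) ^ m) * ENNReal.ofReal Iw) * (ENNReal.ofReal Iw)⁻¹ :=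
        mul_le_mul_left hmid _
    _ = ENNReal.ofReal ((1 / κ) ^ m) * IP A := by
        rw [mul_assoc (IP A), mul_assoc (ENNReal.ofReal ((1 / κ) ^ m)),
          ENNReal.mul_inv_cancel hcne hct, mul_one, mul_comm]
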